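/- Let κ be a finite measure and λ a probability measure on a σ-field 𝒢, and let 𝒢ₙ be an increasing sequence of sub-σ-fields whose union generates 𝒢. Suppose that for each n, the restriction of κ to 𝒢ₙ is absolutely continuous with respect to the restriction of λ to 𝒢ₙ, with Radon–Nikodým derivative Xₙ. Set X := limsup_{n→∞} Xₙ. Then κ is mutually singular with λ if and only if X = ∞ κ-almost everywhere. -/

import Mathlib

open MeasureTheory Filter
open scoped ENNReal Topology

lemma rn_aux_mono {x y : ℝ} (hx : 0 ≤ x) (hxy : x ≤ y) :
    x / (1 + x) ≤ y / (1 + y) := by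
  rw [div_le_div_iff₀ (by linarith) (by linarith)]
  nlinarith

lemma rn_aux_toReal {a : ℝ≥0∞} (ha : a ≠ ⊤) :
    (a / (1 + a)).toReal = a.toReal / (1 + a.toReal) := by
  rw [ENNReal.toReal_div, ENNReal.toReal_add ENNReal.one_ne_top ha, ENNReal.toReal_one]

lemma rn_aux_forward {a : ℕ → ℝ≥0∞} (hfin : ∀ n, a n ≠ ⊤)
    (hconv : Tendsto (fun n => (a n).toReal / (1 + (a n).toReal)) atTop (𝓝 1)) :
    limsup a atTop = ⊤ := by
  by_contra h
  have hlt : limsup a atTop < ⊤ := lt_top_iff_ne_top.2 h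
  obtain ⟨c, hc1, hc2⟩ := exists_between hlt
  have hcne : c ≠ ⊤ := hc2.ne
  have hev : ∀ᶠ n in atTop, a n < c := eventually_lt_of_limsup_lt hc1
  have hr : c.toReal / (1 + c.toReal) < 1 := by
    rw [div_lt_one (by positivity)]
    linarith [ENNReal.toReal_nonneg (a := c)]
  have hev2 : ∀ᶠ n in atTop, c.toReal / (1 + c.toReal) <
      (a n).toReal / (1 + (a n).toReal) := hconv.eventually_const_lt hr
  obtain ⟨n, h1, h2⟩ := (hev.and hev2).exists
  have : (a n).toReal / (1 + (a n).toReal) ≤ c.toReal / (1 + c.toReal) :=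
    rn_aux_mono ENNReal.toReal_nonneg (ENNReal.toReal_mono hcne h1.le)
  linarith

lemma rn_aux_backward {a : ℕ → ℝ≥0∞} {L : ℝ} (hfin : ∀ n, a n ≠ ⊤)
    (hconv : Tendsto (fun n => (a n).toReal / (1 + (a n).toReal)) atTop (𝓝 L))
    (hlim : limsup a atTop = ⊤) : 1 ≤ L := by
  have hk : ∀ k : ℕ, (k : ℝ) / (1 + k) ≤ L := by
    intro k
    by_contra hc
    push_neg at hc
    have hev : ∀ᶠ n in atTop, (a n).toReal / (1 + (a n).toReal) < (k : ℝ) / (1 + k) :=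
      hconv.eventually_lt_const hc
    have hfreq : ∃ᶠ n in atTop, (k : ℝ≥0∞) < a n := by
      exact frequently_lt_of_lt_limsup (by isBoundedDefault)
        (by rw [hlim]; exact ENNReal.natCast_lt_top k)
    obtain ⟨n, h1, h2⟩ := (hfreq.and_eventually hev).exists
    have hle : (k : ℝ) ≤ (a n).toReal := by
      have := ENNReal.toReal_mono (hfin n) h1.le
      simpa using this
    have := rn_aux_mono (by positivity) hle
    linarith
  have htend : Tendsto (fun k : ℕ => (k : ℝ) / (1 + k)) atTop (𝓝 1) := by
    have := tendsto_natCast_div_add_atTop (1 : ℝ)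
    simpa [add_comm] using this
  exact le_of_tendsto htend (Eventually.of_forall hk)

/-- **Radon–Nikodým dichotomy, mutual singularity part.**
Let `κ` be a finite measure and `λ` a probability measure on a σ-field `m`,
let `𝒢 n` be an increasing sequence of sub-σ-fields whose union generates `m`,
and let `X n` be a `𝒢 n`-measurable version of the Radon–Nikodým derivative of
`κ` restricted to `𝒢 n` with respect to `λ` restricted to `𝒢 n`.
Then `κ ⟂ λ` iff `limsup X n = ∞` κ-a.e. -/
theorem rn_dichotomy_singular {Ω : Type*} {m : MeasurableSpace Ω}
    (κ lam : Measure Ω) [IsFiniteMeasure κ] [IsProbabilityMeasure lam]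
    (𝒢 : ℕ → MeasurableSpace Ω) (hmono : Monotone 𝒢) (hle : ∀ n, 𝒢 n ≤ m)
    (hgen : (⨆ n, 𝒢 n) = m)
    (X : ℕ → Ω → ℝ≥0∞) (hXmeas : ∀ n, Measurable[𝒢 n] (X n))
    (hXrn : ∀ n s, MeasurableSet[𝒢 n] s → κ s = ∫⁻ x in s, X n x ∂lam) :
    κ ⟂ₘ lam ↔ (∀ᵐ x ∂κ, limsup (fun n => X n x) atTop = ⊤) := by
  set ρ : Measure Ω := κ + lam with hρ
  have hκρ : κ ≪ ρ := Measure.absolutelyContinuous_of_le (Measure.le_add_right le_rfl)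
  set f : Ω → ℝ≥0∞ := κ.rnDeriv ρ with hfdef
  have hfmeas : Measurable f := Measure.measurable_rnDeriv κ ρ
  have hκ_eq : ∀ s : Set Ω, κ s = ∫⁻ x in s, f x ∂ρ :=
    fun s => (Measure.setLIntegral_rnDeriv hκρ s).symm
  set g : Ω → ℝ := fun x => (f x).toReal with hgdef
  have hg_int : Integrable g ρ := Measure.integrable_toReal_rnDeriv
  have hgmeas : Measurable g := hfmeas.ennreal_toReal
  -- Step A : X n is a.e. finite
  have hXinf : ∀ n, ρ {x | X n x = ⊤} = 0 := by
    intro n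
    have hs𝒢 : MeasurableSet[𝒢 n] {x | X n x = ⊤} := hXmeas n (measurableSet_singleton ⊤)
    have hsm : MeasurableSet {x | X n x = ⊤} := hle n _ hs𝒢
    have hκs : κ {x | X n x = ⊤} = ∫⁻ x in {x | X n x = ⊤}, X n x ∂lam := hXrn n _ hs𝒢
    have hlam0 : lam {x | X n x = ⊤} = 0 := by
      by_contra h0
      have : κ {x | X n x = ⊤} = ⊤ := by
        rw [hκs, setLIntegral_congr_fun hsm (fun x hx => hx),
          setLIntegral_const, ENNReal.top_mul h0]
      exact measure_ne_top κ _ this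
    have hκ0 : κ {x | X n x = ⊤} = 0 := by
      rw [hκs, Measure.restrict_eq_zero.mpr hlam0, lintegral_zero_measure]
    simp [hρ, Measure.add_apply, hκ0, hlam0]
  have hXfin_ae : ∀ᵐ x ∂ρ, ∀ n, X n x ≠ ⊤ := by
    rw [ae_all_iff]
    intro n
    rw [ae_iff]
    simpa using hXinf n
  -- Step B : integral transfer from κ to lam
  have hint_trans : ∀ n (h : Ω → ℝ≥0∞), Measurable[𝒢 n] h →
      ∫⁻ x, h x ∂κ = ∫⁻ x, h x * X n x ∂lam := by
    intro n h hh
    have htrim : κ.trim (hle n) = (lam.trim (hle n)).withDensity (X n) := by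
      refine @Measure.ext _ (𝒢 n) _ _ fun s hs => ?_
      rw [trim_measurableSet_eq (hle n) hs, hXrn n s hs,
        @withDensity_apply _ (𝒢 n) _ _ s hs]
      rw [← lintegral_indicator (hle n s hs) _,
        ← @lintegral_indicator _ (𝒢 n) _ _ hs _]
      exact (lintegral_trim (hle n) ((hXmeas n).indicator hs)).symm
    calc ∫⁻ x, h x ∂κ = ∫⁻ x, h x ∂(κ.trim (hle n)) := (lintegral_trim (hle n) hh).symm
      _ = ∫⁻ x, h x ∂((lam.trim (hle n)).withDensity (X n)) := by rw [htrim]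
      _ = ∫⁻ x, (X n * h) x ∂(lam.trim (hle n)) :=
          @lintegral_withDensity_eq_lintegral_mul _ (𝒢 n) (lam.trim (hle n)) (X n) (hXmeas n) h hh
      _ = ∫⁻ x, (X n * h) x ∂lam := lintegral_trim (hle n) ((hXmeas n).mul hh)
      _ = ∫⁻ x, h x * X n x ∂lam := by simp_rw [Pi.mul_apply, mul_comm]
  -- Step C : W n, the ratio, integrates to κ on 𝒢 n sets
  set W : ℕ → Ω → ℝ≥0∞ := fun n x => X n x / (1 + X n x) with hWdef
  have hWmeas𝒢 : ∀ n, Measurable[𝒢 n] (W n) :=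
    fun n => (hXmeas n).div (measurable_const.add (hXmeas n))
  have hWmeas : ∀ n, Measurable (W n) := fun n => (hWmeas𝒢 n).mono (hle n) le_rfl
  have hW_le_one : ∀ n x, W n x ≤ 1 := by
    intro n x
    exact ENNReal.div_le_of_le_mul (by rw [one_mul]; exact le_add_self)
  have hWint : ∀ n s, MeasurableSet[𝒢 n] s → ∫⁻ x in s, W n x ∂ρ = κ s := by
    intro n s hs
    have hsm : MeasurableSet s := hle n _ hs
    have h1 : ∫⁻ x in s, W n x ∂κ = ∫⁻ x in s, W n x * X n x ∂lam := by
      rw [← lintegral_indicator hsm _, ← lintegral_indicator hsm _]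
      rw [hint_trans n _ ((hWmeas𝒢 n).indicator hs)]
      congr 1
      funext x
      by_cases hx : x ∈ s <;> simp [Set.indicator, hx]
    have h2 : ∫⁻ x in s, W n x ∂ρ
        = ∫⁻ x in s, W n x * X n x ∂lam + ∫⁻ x in s, W n x ∂lam := by
      rw [hρ, Measure.restrict_add, lintegral_add_measure, h1]
    rw [h2, ← lintegral_add_left (f := fun x => W n x * X n x) ((hWmeas n).mul (hXmeas n |>.mono (hle n) le_rfl))]
    have hae : ∀ᵐ x ∂lam, W n x * X n x + W n x = X n x := by
      have hfin : ∀ᵐ x ∂lam, X n x ≠ ⊤ := by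
        rw [ae_iff]
        have : lam {x | X n x = ⊤} = 0 :=
          measure_mono_null (fun x hx => hx) (by
            have := hXinf n
            rw [hρ, Measure.add_apply, add_eq_zero] at this
            exact this.2)
        simpa using this
      filter_upwards [hfin] with x hx
      rw [hWdef]
      simp only
      rw [← mul_one (X n x / (1 + X n x)), mul_assoc, one_mul, ← mul_add,
        add_comm (X n x) 1]
      exact ENNReal.div_mul_cancel (by simp) (by simp [hx])
    rw [lintegral_congr_ae (ae_restrict_of_ae hae)]
    exact (hXrn n s hs).symm
  -- Bochner version
  have hf_lt_top : ∀ᵐ x ∂ρ, f x < ⊤ := Measure.rnDeriv_lt_top κ ρ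
  have hWint' : ∀ n s, MeasurableSet[𝒢 n] s →
      ∫ x in s, (W n x).toReal ∂ρ = ∫ x in s, g x ∂ρ := by
    intro n s hs
    rw [integral_toReal ((hWmeas n).aemeasurable.restrict)
        (ae_restrict_of_ae (ae_of_all _ fun x => lt_of_le_of_lt (hW_le_one n x)
          ENNReal.one_lt_top)),
      hgdef]
    rw [integral_toReal (hfmeas.aemeasurable.restrict) (ae_restrict_of_ae hf_lt_top)]
    rw [hWint n s hs, ← hκ_eq s]
  -- Step D : identify with conditional expectation
  have hW_condexp : ∀ n, (fun x => (W n x).toReal) =ᵐ[ρ] ρ[g | 𝒢 n] := by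
    intro n
    have hWReal_int : Integrable (fun x => (W n x).toReal) ρ := by
      refine (integrable_const (1 : ℝ)).mono' ((hWmeas n).ennreal_toReal.aestronglyMeasurable)
        (ae_of_all _ fun x => ?_)
      rw [Real.norm_eq_abs, abs_of_nonneg ENNReal.toReal_nonneg]
      simpa using ENNReal.toReal_mono ENNReal.one_ne_top (hW_le_one n x)
    exact ae_eq_condExp_of_forall_setIntegral_eq (hle n) hg_int
      (fun s _ _ => hWReal_int.integrableOn)
      (fun s hs _ => hWint' n s hs)
      (StronglyMeasurable.aestronglyMeasurable
        ((hWmeas𝒢 n).ennreal_toReal.stronglyMeasurable))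
  -- Step E : Lévy upward theorem
  have hconv : ∀ᵐ x ∂ρ, Tendsto (fun n => (W n x).toReal) atTop (𝓝 (g x)) := by
    set ℱ : Filtration ℕ m := ⟨𝒢, hmono, hle⟩ with hℱ
    have hgsm : StronglyMeasurable[⨆ n, ℱ n] g := by
      have h_eq : (⨆ n, (ℱ n : MeasurableSpace Ω)) = m := hgen
      exact h_eq.symm ▸ hgmeas.stronglyMeasurable
    have hlevy := hg_int.tendsto_ae_condExp hgsm
    filter_upwards [hlevy, ae_all_iff.2 hW_condexp] with x h1 h2
    exact Tendsto.congr (fun n => (h2 n).symm) h1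
  have hf_le_one : ∀ᵐ x ∂ρ, f x ≤ 1 :=
    Measure.rnDeriv_le_one_of_le (Measure.le_add_right le_rfl)
  -- transfers to κ
  have hconvκ : ∀ᵐ x ∂κ, Tendsto (fun n => (W n x).toReal) atTop (𝓝 (g x)) :=
    hκρ.ae_le hconv
  have hXfinκ : ∀ᵐ x ∂κ, ∀ n, X n x ≠ ⊤ := hκρ.ae_le hXfin_ae
  have hf_le_oneκ : ∀ᵐ x ∂κ, f x ≤ 1 := hκρ.ae_le hf_le_one
  have hf_lt_topκ : ∀ᵐ x ∂κ, f x < ⊤ := hκρ.ae_le hf_lt_top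
  constructor
  · -- singular → limsup = ⊤
    rintro ⟨s, hsm, hκs, hlam_s⟩
    -- f = 1 κ-a.e.
    have hf1 : ∀ᵐ x ∂κ, f x = 1 := by
      set A : Set Ω := {x | f x < 1} ∩ sᶜ with hA
      have hAm : MeasurableSet A :=
        (measurableSet_lt hfmeas measurable_const).inter hsm.compl
      have hlam_A : lam A = 0 :=
        measure_mono_null Set.inter_subset_right hlam_s
      have hκA_eq : κ A = ∫⁻ x in A, f x ∂κ := by
        rw [hκ_eq A, hρ, Measure.restrict_add, lintegral_add_measure,
          setLIntegral_measure_zero A f hlam_A, add_zero]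
      have hfinA : ∫⁻ x in A, f x ∂κ ≠ ⊤ := by
        rw [← hκA_eq]; exact measure_ne_top κ A
      have hsub : ∫⁻ x in A, (1 - f x) ∂κ = 0 := by
        rw [lintegral_sub hfmeas hfinA
          (by filter_upwards [ae_restrict_mem hAm] with x hx
              exact hx.1.le),
          setLIntegral_one, ← hκA_eq, tsub_self]
      have h0 : ∀ᵐ x ∂κ.restrict A, (1 : ℝ≥0∞) - f x = 0 :=
        (lintegral_eq_zero_iff (measurable_const.sub hfmeas)).mp hsub
      have hFalse : ∀ᵐ x ∂κ.restrict A, False := by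
        filter_upwards [h0, ae_restrict_mem hAm] with x hx hmem
        rw [tsub_eq_zero_iff_le] at hx
        exact absurd hmem.1 (not_lt.mpr hx)
      have hκA : κ A = 0 := by
        rw [ae_iff] at hFalse
        simpa [Measure.restrict_apply_univ] using hFalse
      have hsubset : {x | f x < 1} ⊆ A ∪ s := by
        intro x hx
        by_cases hxs : x ∈ s
        · exact Or.inr hxs
        · exact Or.inl ⟨hx, hxs⟩
      have : κ {x | f x < 1} = 0 :=
        le_antisymm (le_trans (measure_mono hsubset)
          (le_trans (measure_union_le A s) (by rw [hκA, hκs, add_zero]))) zero_le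
      filter_upwards [hf_le_oneκ, (ae_iff.mpr (by simpa using this) :
        ∀ᵐ x ∂κ, ¬ f x < 1)] with x h1 h2
      exact le_antisymm h1 (not_lt.mp h2)
    filter_upwards [hconvκ, hXfinκ, hf1] with x hc hfin hf1x
    have hg1 : g x = 1 := by rw [hgdef]; simp [hf1x]
    rw [hg1] at hc
    exact rn_aux_forward hfin (hc.congr fun n => rn_aux_toReal (hfin n))
  · -- limsup = ⊤ → singular
    intro hX
    have hf1 : ∀ᵐ x ∂κ, f x = 1 := by
      filter_upwards [hX, hconvκ, hXfinκ, hf_le_oneκ, hf_lt_topκ]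
        with x hlimsup hc hfin hfle hflt
      have hc' : Tendsto (fun n => (X n x).toReal / (1 + (X n x).toReal)) atTop (𝓝 (g x)) :=
        hc.congr fun n => rn_aux_toReal (hfin n)
      have h1le : 1 ≤ g x := rn_aux_backward hfin hc' hlimsup
      have hle1 : g x ≤ 1 := by
        simpa using ENNReal.toReal_mono ENNReal.one_ne_top hfle
      have hg1 : g x = 1 := le_antisymm hle1 h1le
      rw [← ENNReal.toReal_eq_one_iff]
      exact hg1
    set t : Set Ω := {x | f x = 1} with ht
    have htm : MeasurableSet t := hfmeas (measurableSet_singleton 1)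
    have hκtc : κ tᶜ = 0 := by
      rw [ae_iff] at hf1
      simpa [ht, Set.compl_setOf] using hf1
    have hκt : κ t = κ t + lam t := by
      conv_lhs => rw [hκ_eq t, hρ, Measure.restrict_add, lintegral_add_measure]
      congr 1
      · rw [setLIntegral_congr_fun htm (fun x hx => hx), setLIntegral_one]
      · rw [setLIntegral_congr_fun htm (fun x hx => hx), setLIntegral_one]
    have hlam_t : lam t = 0 := by
      have h2 := hκt
      nth_rewrite 1 [← add_zero (κ t)] at h2
      exact ((ENNReal.add_right_inj (measure_ne_top κ t)).mp h2).symm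
    exact ⟨tᶜ, htm.compl, hκtc, by rwa [compl_compl]⟩
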